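/- Define h(Q) = 1/(1 + √((1−Q)(1+Q)/(Q(2−Q)))). Then there exists x ∈ (1−Q, Q) with H(x) ≥ Q/(1−Q) if and only if R ≥ h(Q). Moreover h(Q) > 1/2; in particular, when R = 1/2 no such x exists, i.e. up-cascades can never start. -/

import Mathlib

set_option maxHeartbeats 1000000


/-- For qualities uniform on `[R, Q]`, an up-cascade can start
(i.e. `H(x) ≥ Q/(1−Q)` for some `x ∈ (1−Q, Q)`) iff `R ≥ h(Q)`, where
`h(Q) = 1/(1 + √((1−Q)(1+Q)/(Q(2−Q))))`; moreover `h(Q) > 1/2`, so in particular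
when `R = 1/2` up-cascades can never start. -/
theorem uniform_min_R_for_cascades
    (R Q : ℝ) (hR : 1/2 ≤ R) (hRQ : R < Q) (hQ1 : Q < 1)
    (F1 F0 H : ℝ → ℝ)
    (hF1 : ∀ y ∈ Set.Icc (1 - Q) Q, F1 y =
      if y ≤ 1 - R then (y ^ 2 - (1 - Q) ^ 2) / (2 * (Q - R))
      else if y ≤ R then 1 - (Q + R) / 2
      else 1 - (Q ^ 2 - y ^ 2) / (2 * (Q - R)))
    (hF0 : ∀ y ∈ Set.Icc (1 - Q) Q, F0 y =
      if y ≤ 1 - R then (Q ^ 2 - (1 - y) ^ 2) / (2 * (Q - R))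
      else if y ≤ R then (Q + R) / 2
      else 1 - ((1 - y) ^ 2 - (1 - Q) ^ 2) / (2 * (Q - R)))
    (hH : ∀ x, H x = ((1 - x) / x) * ((1 - F1 x) / (1 - F0 x))) :
    ((∃ x, 1 - Q < x ∧ x < Q ∧ Q / (1 - Q) ≤ H x) ↔
        1 / (1 + Real.sqrt ((1 - Q) * (1 + Q) / (Q * (2 - Q)))) ≤ R) ∧
      1/2 < 1 / (1 + Real.sqrt ((1 - Q) * (1 + Q) / (Q * (2 - Q)))) := by
  have hQhalf : 1/2 < Q := lt_of_le_of_lt hR hRQ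
  have hQ0 : 0 < Q := by linarith
  have h1Q : 0 < 1 - Q := by linarith
  have h2Q : 0 < 2 - Q := by linarith
  have hR0 : 0 < R := by linarith
  have hR1 : R < 1 := by linarith
  have hQR : 0 < Q - R := by linarith
  have hQRs : 1 < Q + R := by linarith
  have hQRb : Q + R < 2 := by linarith
  set s := Real.sqrt ((1 - Q) * (1 + Q) / (Q * (2 - Q))) with hs_def
  have harg : 0 < (1 - Q) * (1 + Q) / (Q * (2 - Q)) := by positivity
  have hs0 : 0 < s := Real.sqrt_pos.mpr harg
  have hs2 : s ^ 2 = (1 - Q) * (1 + Q) / (Q * (2 - Q)) := Real.sq_sqrt harg.le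
  have harg1 : (1 - Q) * (1 + Q) / (Q * (2 - Q)) < 1 := by
    rw [div_lt_one (by positivity)]
    nlinarith
  have hs1 : s < 1 := by nlinarith [hs0, hs2]
  have h1s : 0 < 1 + s := by linarith
  -- key equivalence: 1/(1+s) ≤ R ↔ 0 ≤ K
  have hRiff : 1 / (1 + s) ≤ R ↔
      0 ≤ (1 - Q) * (1 + Q) * R ^ 2 - Q * (2 - Q) * (1 - R) ^ 2 := by
    constructor
    · intro h
      have h1 : 1 ≤ R * (1 + s) := (div_le_iff₀ h1s).mp h
      have h2 : 1 - R ≤ R * s := by nlinarith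
      have h3 : (1 - R) ^ 2 ≤ (R * s) ^ 2 :=
        pow_le_pow_left₀ (by linarith) h2 2
      have h4 : (R * s) ^ 2 = R ^ 2 * ((1 - Q) * (1 + Q)) / (Q * (2 - Q)) := by
        rw [mul_pow, hs2]; ring
      rw [h4] at h3
      have h5 := (le_div_iff₀ (by positivity : (0:ℝ) < Q * (2 - Q))).mp h3
      nlinarith
    · intro h
      have h3 : (1 - R) ^ 2 ≤ (R * s) ^ 2 := by
        have h4 : (R * s) ^ 2 = R ^ 2 * ((1 - Q) * (1 + Q)) / (Q * (2 - Q)) := by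
          rw [mul_pow, hs2]; ring
        rw [h4, le_div_iff₀ (by positivity : (0:ℝ) < Q * (2 - Q))]
        nlinarith
      have h2 : 1 - R ≤ R * s := by
        by_contra hcon
        push_neg at hcon
        have : 0 ≤ R * s := by positivity
        nlinarith
      rw [div_le_iff₀ h1s]
      nlinarith
  constructor
  · constructor
    · -- forward: existence of x implies R ≥ h(Q)
      rintro ⟨x, hx1, hx2, hx3⟩
      rw [hRiff]
      have hmem : x ∈ Set.Icc (1 - Q) Q := ⟨hx1.le, hx2.le⟩
      have hx0 : 0 < x := by linarith
      have hx1' : x < 1 := by linarith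
      have hD : (0:ℝ) < 2 * (Q - R) := by linarith
      rw [hH] at hx3
      rcases le_or_gt x (1 - R) with hc1 | hc1
      · -- left region
        have e1 : 1 - F1 x = (2 * (Q - R) - x ^ 2 + (1 - Q) ^ 2) / (2 * (Q - R)) := by
          rw [hF1 x hmem, if_pos hc1]
          field_simp
          ring
        have e0 : 1 - F0 x = (2 * (Q - R) - Q ^ 2 + (1 - x) ^ 2) / (2 * (Q - R)) := by
          rw [hF0 x hmem, if_pos hc1]
          field_simp
          ring
        have h1xR : R ≤ 1 - x := by linarith
        have pB : 0 < 2 * (Q - R) - Q ^ 2 + (1 - x) ^ 2 := by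
          nlinarith [mul_le_mul h1xR h1xR hR0.le (by linarith : (0:ℝ) ≤ 1 - x),
            mul_pos hQR (show (0:ℝ) < 2 - Q - R by linarith)]
        rw [e1, e0] at hx3
        have hexp : ((1 - x) / x) *
            (((2 * (Q - R) - x ^ 2 + (1 - Q) ^ 2) / (2 * (Q - R))) /
             ((2 * (Q - R) - Q ^ 2 + (1 - x) ^ 2) / (2 * (Q - R)))) =
            ((1 - x) * (2 * (Q - R) - x ^ 2 + (1 - Q) ^ 2)) /
             (x * (2 * (Q - R) - Q ^ 2 + (1 - x) ^ 2)) := by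
          field_simp
        rw [hexp] at hx3
        have key := (div_le_div_iff₀ h1Q (mul_pos hx0 pB)).mp hx3
        -- key : Q * (x * N0) ≤ (1-x) * N1 * (1-Q)  (φ(x) ≥ 0)
        have hψ : 0 ≤ (1 - 2*Q) * x ^ 2 + 2 * Q ^ 2 * x - (2 * (Q - R) + (1 - Q) ^ 2) := by
          by_contra h
          push_neg at h
          nlinarith [mul_pos (show 0 < x - (1 - Q) by linarith)
            (show 0 < (2 * (Q - R) + (1 - Q) ^ 2) - ((1 - 2*Q) * x ^ 2 + 2 * Q ^ 2 * x) by linarith)]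
        have hbr : 0 ≤ 2 * Q ^ 2 - (2*Q - 1) * (1 - R + x) := by
          nlinarith [mul_le_mul_of_nonneg_left (show 1 - R + x ≤ 1 by linarith)
            (show (0:ℝ) ≤ 2*Q - 1 by linarith), sq_nonneg (2*Q - 1)]
        have hprod := mul_nonneg (show (0:ℝ) ≤ 1 - R - x by linarith) hbr
        nlinarith [hψ, hprod]
      · rcases le_or_gt x R with hc2 | hc2
        · -- middle region
          have e1 : 1 - F1 x = (Q + R) / 2 := by
            rw [hF1 x hmem, if_neg (not_le.mpr hc1), if_pos hc2]; ring
          have e0 : 1 - F0 x = (2 - Q - R) / 2 := by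
            rw [hF0 x hmem, if_neg (not_le.mpr hc1), if_pos hc2]; ring
          rw [e1, e0] at hx3
          have hmid : (0:ℝ) < 2 - Q - R := by linarith
          have hexp : ((1 - x) / x) * (((Q + R) / 2) / ((2 - Q - R) / 2)) =
              ((1 - x) * (Q + R)) / (x * (2 - Q - R)) := by
            field_simp
          rw [hexp] at hx3
          have key := (div_le_div_iff₀ h1Q (mul_pos hx0 hmid)).mp hx3
          linarith [key,
            mul_nonneg (mul_nonneg hQ0.le hmid.le) (show (0:ℝ) ≤ x - (1 - R) by linarith),
            mul_nonneg (mul_nonneg h1Q.le (show (0:ℝ) ≤ Q + R by linarith))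
              (show (0:ℝ) ≤ R - (1 - x) by linarith)]
        · -- right region
          have e1 : 1 - F1 x = (Q ^ 2 - x ^ 2) / (2 * (Q - R)) := by
            rw [hF1 x hmem, if_neg (by linarith : ¬ x ≤ 1 - R), if_neg (not_le.mpr hc2)]; ring
          have e0 : 1 - F0 x = ((1 - x) ^ 2 - (1 - Q) ^ 2) / (2 * (Q - R)) := by
            rw [hF0 x hmem, if_neg (by linarith : ¬ x ≤ 1 - R), if_neg (not_le.mpr hc2)]; ring
          have hQx : 0 < Q - x := by linarith
          have h2xQ : (0:ℝ) < 2 - x - Q := by linarith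
          have pB : 0 < (1 - x) ^ 2 - (1 - Q) ^ 2 := by nlinarith [mul_pos hQx h2xQ]
          rw [e1, e0] at hx3
          have hexp : ((1 - x) / x) *
              (((Q ^ 2 - x ^ 2) / (2 * (Q - R))) /
               (((1 - x) ^ 2 - (1 - Q) ^ 2) / (2 * (Q - R)))) =
              ((1 - x) * (Q ^ 2 - x ^ 2)) / (x * ((1 - x) ^ 2 - (1 - Q) ^ 2)) := by
            field_simp
          rw [hexp] at hx3
          have key := (div_le_div_iff₀ h1Q (mul_pos hx0 pB)).mp hx3
          -- divide by (Q - x): Q x (2-x-Q) ≤ (1-Q)(1-x)(Q+x)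
          have step1 : Q * x * (2 - x - Q) ≤ (1 - Q) * (1 - x) * (Q + x) := by
            by_contra h
            push_neg at h
            nlinarith [mul_pos hQx (show 0 < Q * x * (2 - x - Q) - (1 - Q) * (1 - x) * (Q + x) by linarith)]
          -- second factor of D(x) positive
          have hfac : 0 ≤ (R - Q) * x + Q * (2 - R - Q) := by
            nlinarith [mul_nonneg hQx.le hQR.le]
          have hD2 : 0 ≤ (x - R) * ((R - Q) * x + Q * (2 - R - Q)) :=
            mul_nonneg (by linarith) hfac
          have step2 : Q * R * (2 - R - Q) ≤ (1 - Q) * (1 - R) * (Q + R) := by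
            by_contra h
            push_neg at h
            have h5 := mul_le_mul_of_nonneg_left step1
              (show (0:ℝ) ≤ R * (2 - R - Q) by nlinarith)
            have h6 := mul_nonneg h1Q.le hD2
            have h7 := mul_pos (mul_pos hx0 h2xQ)
              (show 0 < Q * R * (2 - R - Q) - (1 - Q) * (1 - R) * (Q + R) by linarith)
            linarith [h5, h6, h7]
          linarith [step2,
            mul_nonneg (mul_nonneg hQ0.le (show (0:ℝ) ≤ 2 - Q - R by linarith))
              (show (0:ℝ) ≤ R - (1 - R) by linarith),
            mul_nonneg (mul_nonneg h1Q.le (show (0:ℝ) ≤ Q + R by linarith))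
              (show (0:ℝ) ≤ R - (1 - R) by linarith)]
    · -- backward: R ≥ h(Q) implies witness x = 1 - R
      intro hhR
      have hK := hRiff.mp hhR
      refine ⟨1 - R, by linarith, by linarith, ?_⟩
      have hmem : (1 - R) ∈ Set.Icc (1 - Q) Q := ⟨by linarith, by linarith⟩
      have e1 : 1 - F1 (1 - R) = (Q + R) / 2 := by
        rw [hF1 _ hmem, if_pos le_rfl]
        field_simp
        ring
      have e0 : 1 - F0 (1 - R) = (2 - Q - R) / 2 := by
        rw [hF0 _ hmem, if_pos le_rfl]
        field_simp
        ring
      rw [hH, e1, e0]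
      have hmid : (0:ℝ) < 2 - Q - R := by linarith
      have h1R : (0:ℝ) < 1 - R := by linarith
      have hexp : ((1 - (1 - R)) / (1 - R)) * (((Q + R) / 2) / ((2 - Q - R) / 2)) =
          (R * (Q + R)) / ((1 - R) * (2 - Q - R)) := by
        field_simp
        ring
      rw [hexp, div_le_div_iff₀ h1Q (mul_pos h1R hmid)]
      linarith [hK]
  · -- h(Q) > 1/2
    rw [div_lt_div_iff₀ (by norm_num : (0:ℝ) < 2) h1s]
    linarith
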